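/- Let R be a commutative local ring and A(x) ∈ M₂(R[[x]]). Then A(x) is quasipolar in M₂(R[[x]]) if and only if A(0) is quasipolar in M₂(R). -/

import Mathlib

set_option maxHeartbeats 1000000

open Matrix IsLocalRing
/-- `q` is quasinilpotent: `1 + q*x` is a unit for every `x` commuting with `q`. -/
def Quasinilpotent {S : Type*} [Ring S] (q : S) : Prop :=
  ∀ x : S, q * x = x * q → IsUnit (1 + q * x)

/-- `a` is quasipolar: there is an idempotent `p` in the double commutant of `a`
with `a + p` a unit and `a*p` quasinilpotent. -/
def Quasipolar {S : Type*} [Ring S] (a : S) : Prop :=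
  ∃ p : S, p * p = p ∧ (∀ y : S, y * a = a * y → p * y = y * p) ∧
    IsUnit (a + p) ∧ Quasinilpotent (a * p)

section Helpers

variable {S : Type*} [CommRing S] [IsLocalRing S]

lemma mem_max_iff {a : S} : a ∈ maximalIdeal S ↔ ¬ IsUnit a := by
  simp [IsLocalRing.mem_maximalIdeal, mem_nonunits_iff]

lemma isUnit_one_add {a : S} (h : a ∈ maximalIdeal S) : IsUnit (1 + a) := by
  by_contra hc
  have h1 : (1 : S) + a ∈ maximalIdeal S := mem_max_iff.mpr hc
  have : (1 : S) ∈ maximalIdeal S := by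
    have := Ideal.sub_mem _ h1 h
    simpa using this
  exact (maximalIdeal.isMaximal S).ne_top (Ideal.eq_top_of_isUnit_mem _ this isUnit_one)

lemma isUnit_unit_sub_mem {α β : S} (hα : α ∈ maximalIdeal S) (hβ : IsUnit β) :
    IsUnit (β - α) := by
  by_contra hc
  have h1 : β - α ∈ maximalIdeal S := mem_max_iff.mpr hc
  have : β ∈ maximalIdeal S := by
    have := Ideal.add_mem _ h1 hα
    simpa using this
  exact mem_max_iff.mp this hβ

lemma mem_of_sq_mem {a : S} (h : a * a ∈ maximalIdeal S) : a ∈ maximalIdeal S := by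
  have hp : (maximalIdeal S).IsPrime := Ideal.IsMaximal.isPrime (maximalIdeal.isMaximal S)
  rcases hp.mem_or_mem h with h' | h' <;> exact h'

lemma idem_zero_or_one {e : S} (h : e * e = e) : e = 0 ∨ e = 1 := by
  by_cases hu : IsUnit e
  · right
    exact hu.mul_left_cancel (h.trans (mul_one _).symm)
  · left
    have h1 : IsUnit (1 - e) := by
      have := isUnit_one_add (a := -e) (by simpa [mem_max_iff] using hu)
      simpa [sub_eq_add_neg] using this
    obtain ⟨u, hu'⟩ := h1
    have h2 : e * (1 - e) = 0 := by ring_nf; linear_combination -h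
    have := congrArg (fun x => x * (↑u⁻¹ : S)) h2
    simp only [mul_assoc, zero_mul] at this
    rwa [← hu', Units.mul_inv, mul_one] at this

end Helpers

section Mat2

variable {S : Type*} [CommRing S]

lemma cayley_hamilton_fin_two (A : Matrix (Fin 2) (Fin 2) S) :
    A * A = (trace A) • A - (det A) • 1 := by
  ext i j
  fin_cases i <;> fin_cases j <;>
    simp [Matrix.mul_apply, Fin.sum_univ_two, Matrix.det_fin_two, Matrix.trace_fin_two,
      Matrix.one_apply] <;> ring

lemma qp_det_one_add_smul (α : S) (M : Matrix (Fin 2) (Fin 2) S) :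
    det (1 + α • M) = 1 + α * trace M + α ^ 2 * det M := by
  simp [Matrix.det_fin_two, Matrix.trace_fin_two, Matrix.one_apply]
  ring

lemma qp_det_smul_add_smul_one (u v : S) (A : Matrix (Fin 2) (Fin 2) S) :
    det (u • A + v • 1) = u ^ 2 * det A + u * v * trace A + v ^ 2 := by
  simp [Matrix.det_fin_two, Matrix.trace_fin_two, Matrix.one_apply]
  ring

lemma qp_det_one_add (M : Matrix (Fin 2) (Fin 2) S) :
    det (1 + M) = 1 + trace M + det M := by
  have := qp_det_one_add_smul (1 : S) M
  simpa using this

lemma trace_sq (M : Matrix (Fin 2) (Fin 2) S) :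
    trace (M * M) = trace M * trace M - 2 * det M := by
  simp [Matrix.trace_fin_two, Matrix.mul_apply, Fin.sum_univ_two, Matrix.det_fin_two]
  ring

end Mat2

section Conj

variable {T : Type*} [Ring T]

lemma Quasinilpotent.conj {a u v : T} (huv : u * v = 1) (hvu : v * u = 1)
    (h : Quasinilpotent a) : Quasinilpotent (v * a * u) := by
  intro y hy
  have hu : IsUnit u := ⟨⟨u, v, huv, hvu⟩, rfl⟩
  have hv : IsUnit v := ⟨⟨v, u, hvu, huv⟩, rfl⟩
  have hcomm : a * (u * y * v) = (u * y * v) * a := by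
    have h2 := congrArg (fun z => u * z * v) hy
    simp only [mul_assoc] at h2 ⊢
    simp only [← mul_assoc] at h2 ⊢
    calc a * u * y * v = u * v * a * u * y * v := by rw [huv, one_mul]
      _ = u * (v * a * u * y) * v := by simp only [mul_assoc]
      _ = u * (y * (v * a * u)) * v := by rw [hy]
      _ = u * y * v * a * (u * v) := by simp only [mul_assoc]
      _ = u * y * v * a := by rw [huv, mul_one]
  have h1 := h (u * y * v) hcomm
  have key : v * (1 + a * (u * y * v)) * u = 1 + (v * a * u) * y := by
    have expand : v * (1 + a * (u * y * v)) * u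
        = v * u + v * (a * (u * y * (v * u))) := by
      rw [mul_add, add_mul, mul_one]
      simp only [mul_assoc]
    rw [expand, hvu]
    simp only [mul_one, mul_assoc]
  have := (hv.mul h1).mul hu
  rwa [key] at this

end Conj

section Crit

variable {S : Type*} [CommRing S] [IsLocalRing S]

def QPCrit (A : Matrix (Fin 2) (Fin 2) S) : Prop :=
  IsUnit A ∨ (trace A ∈ maximalIdeal S ∧ det A ∈ maximalIdeal S) ∨
    ∃ α β : S, α ∈ maximalIdeal S ∧ IsUnit β ∧ α + β = trace A ∧ α * β = det A

theorem QPCrit.quasipolar {A : Matrix (Fin 2) (Fin 2) S} (h : QPCrit A) : Quasipolar A := by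
  rcases h with hA | ⟨htr, hdet⟩ | ⟨α, β, hα, hβ, hsum, hprod⟩
  · exact ⟨0, by simp, fun y _ => by simp, by simpa using hA, fun y _ => by simp⟩
  · refine ⟨1, by simp, fun y _ => by simp, ?_, ?_⟩
    · rw [Matrix.isUnit_iff_isUnit_det]
      have : det (A + 1) = 1 + (trace A + det A) := by
        rw [add_comm A 1, qp_det_one_add]; ring
      rw [this]
      exact isUnit_one_add (Ideal.add_mem _ htr hdet)
    · intro y hy
      rw [mul_one] at hy ⊢
      rw [Matrix.isUnit_iff_isUnit_det]
      have hd : det (1 + A * y) = 1 + (trace (A * y) + det A * det y) := by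
        rw [qp_det_one_add, det_mul]; ring
      rw [hd]
      refine isUnit_one_add (Ideal.add_mem _ ?_ (Ideal.mul_mem_right _ _ hdet))
      -- trace (A*y) ∈ m since its square is in m
      apply mem_of_sq_mem
      have hsq : (A * y) * (A * y) = (A * A) * (y * y) := by
        rw [mul_assoc, ← mul_assoc y A y, ← hy, mul_assoc, ← mul_assoc]
      have h2 : trace ((A * y) * (A * y)) = trace (A * y) * trace (A * y) - 2 * (det A * det y) := by
        rw [trace_sq, det_mul]
      have h3 : trace ((A * A) * (y * y))
          = trace A * trace (A * (y * y)) - det A * trace (y * y) := by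
        rw [cayley_hamilton_fin_two, Matrix.sub_mul, Matrix.smul_mul, Matrix.smul_mul,
          trace_sub, trace_smul, trace_smul, one_mul]
        simp [smul_eq_mul, mul_assoc]
      have key : trace (A * y) * trace (A * y)
          = trace A * trace (A * (y * y)) - det A * trace (y * y) + 2 * (det A * det y) := by
        rw [← h3, ← hsq]; linear_combination -h2
      rw [key]
      refine Ideal.add_mem _ (Ideal.sub_mem _ ?_ ?_) ?_
      · exact Ideal.mul_mem_right _ _ htr
      · exact Ideal.mul_mem_right _ _ hdet
      · exact Ideal.mul_mem_left _ _ (Ideal.mul_mem_right _ _ hdet)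
  · -- spectral idempotent case
    obtain ⟨w, hw⟩ := (isUnit_unit_sub_mem hα hβ).exists_left_inv
    -- hw : w * (β - α) = 1
    set p : Matrix (Fin 2) (Fin 2) S := w • (β • (1 : Matrix (Fin 2) (Fin 2) S) - A) with hp
    have hCH : A * A = (α + β) • A - (α * β) • (1 : Matrix (Fin 2) (Fin 2) S) := by
      rw [cayley_hamilton_fin_two, hsum, hprod]
    have hsq : (β • (1 : Matrix (Fin 2) (Fin 2) S) - A) * (β • 1 - A)
        = (β - α) • (β • (1 : Matrix (Fin 2) (Fin 2) S) - A) := by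
      rw [Matrix.sub_mul, Matrix.mul_sub, Matrix.mul_sub, hCH]
      ext i j
      simp [Matrix.one_apply, smul_eq_mul]
      split_ifs <;> ring
    have hAp : A * p = α • p := by
      have : A * (β • (1 : Matrix (Fin 2) (Fin 2) S) - A) = α • (β • (1 : Matrix (Fin 2) (Fin 2) S) - A) := by
        rw [Matrix.mul_sub, hCH]
        ext i j
        simp [Matrix.one_apply, smul_eq_mul]
        split_ifs <;> ring
      rw [hp, Matrix.mul_smul, this, smul_comm]
    refine ⟨p, ?_, ?_, ?_, ?_⟩
    · rw [hp, Matrix.smul_mul, Matrix.mul_smul, hsq, smul_smul, smul_smul, mul_comm w,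
        mul_assoc, hw, mul_one]
    · intro y hy
      rw [hp, Matrix.smul_mul, Matrix.mul_smul]
      congr 1
      rw [Matrix.sub_mul, Matrix.mul_sub, Matrix.smul_mul, Matrix.mul_smul, one_mul, mul_one, hy]
    · rw [Matrix.isUnit_iff_isUnit_det]
      have hA_p : A + p = (1 - w) • A + (w * β) • (1 : Matrix (Fin 2) (Fin 2) S) := by
        rw [hp]; ext i j
        simp [Matrix.one_apply, smul_eq_mul]
        split_ifs <;> ring
      rw [hA_p, qp_det_smul_add_smul_one]
      have hval : (1-w)^2 * det A + (1-w)*(w*β)*trace A + (w*β)^2 = (1+α)*β := by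
        linear_combination β * hw - (1-w)^2 * hprod - (1-w)*w*β*hsum
      rw [hval]
      exact (isUnit_one_add hα).mul hβ
    · intro y hy
      rw [hAp, Matrix.smul_mul, Matrix.isUnit_iff_isUnit_det, qp_det_one_add_smul]
      have hre : (1:S) + α * trace (p*y) + α^2 * det (p*y)
          = 1 + (α * trace (p*y) + α^2 * det (p*y)) := by ring
      rw [hre]
      have hα2 : α^2 ∈ maximalIdeal S := by rw [pow_two]; exact Ideal.mul_mem_right _ _ hα
      exact isUnit_one_add (Ideal.add_mem _ (Ideal.mul_mem_right _ _ hα)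
        (Ideal.mul_mem_right _ _ hα2))

end Crit

section Forward

variable {S : Type*} [CommRing S] [IsLocalRing S]

lemma crit_of_E11 (B : Matrix (Fin 2) (Fin 2) S)
    (hPB : !![(1:S),0;0,0] * B = B * !![(1:S),0;0,0])
    (hu : IsUnit (B + !![(1:S),0;0,0])) (hq : Quasinilpotent (B * !![(1:S),0;0,0])) :
    ∃ α β : S, α ∈ maximalIdeal S ∧ IsUnit β ∧ α + β = trace B ∧ α * β = det B := by
  have h01 : B 0 1 = 0 := by
    have := congrFun (congrFun hPB 0) 1
    simpa [Matrix.mul_apply, Fin.sum_univ_two] using this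
  have h10 : B 1 0 = 0 := by
    have := congrFun (congrFun hPB 1) 0
    simpa [Matrix.mul_apply, Fin.sum_univ_two] using this.symm
  have hd : IsUnit (B 1 1) := by
    have h := (Matrix.isUnit_iff_isUnit_det _).mp hu
    rw [Matrix.det_fin_two] at h
    simp only [Matrix.add_apply, Matrix.cons_val', Matrix.cons_val_zero, Matrix.cons_val_one,
      Matrix.head_cons, Matrix.head_fin_const, Matrix.empty_val', Matrix.cons_val_fin_one] at h
    rw [h01, h10] at h
    simp at h
    exact h.2
  have hBE : B * !![(1:S),0;0,0] = (B 0 0) • !![(1:S),0;0,0] := by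
    ext i j
    fin_cases i <;> fin_cases j <;>
      simp [Matrix.mul_apply, Fin.sum_univ_two, h01, h10]
  have ha : B 0 0 ∈ maximalIdeal S := by
    rw [mem_max_iff]
    intro hua
    obtain ⟨a', ha'⟩ := hua.exists_right_inv
    have hcm : (B * !![(1:S),0;0,0]) * ((-a') • !![(1:S),0;0,0])
        = ((-a') • !![(1:S),0;0,0]) * (B * !![(1:S),0;0,0]) := by
      rw [hBE, Matrix.smul_mul, Matrix.mul_smul, Matrix.smul_mul, Matrix.mul_smul]
      rw [smul_smul, smul_smul, mul_comm]
    have hIU := hq _ hcm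
    have hmat : (1 : Matrix (Fin 2) (Fin 2) S) + (B * !![(1:S),0;0,0]) * ((-a') • !![(1:S),0;0,0])
        = !![(0:S),0;0,1] := by
      rw [hBE, Matrix.smul_mul, Matrix.mul_smul, smul_smul]
      ext i j
      fin_cases i <;> fin_cases j <;>
        simp [Matrix.mul_apply, Fin.sum_univ_two, Matrix.one_apply] <;>
        first
          | ring1
          | linear_combination ha'
          | linear_combination -ha'
          | linear_combination 2 * ha'
          | linear_combination -2 * ha'
    rw [hmat, Matrix.isUnit_iff_isUnit_det] at hIU
    simp [Matrix.det_fin_two] at hIU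
  refine ⟨B 0 0, B 1 1, ha, hd, ?_, ?_⟩
  · rw [Matrix.trace_fin_two]
  · rw [Matrix.det_fin_two, h01, h10]; ring

lemma crit_of_E22 (B : Matrix (Fin 2) (Fin 2) S)
    (hPB : !![(0:S),0;0,1] * B = B * !![(0:S),0;0,1])
    (hu : IsUnit (B + !![(0:S),0;0,1])) (hq : Quasinilpotent (B * !![(0:S),0;0,1])) :
    ∃ α β : S, α ∈ maximalIdeal S ∧ IsUnit β ∧ α + β = trace B ∧ α * β = det B := by
  have h01 : B 0 1 = 0 := by
    have := congrFun (congrFun hPB 0) 1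
    simpa [Matrix.mul_apply, Fin.sum_univ_two] using this.symm
  have h10 : B 1 0 = 0 := by
    have := congrFun (congrFun hPB 1) 0
    simpa [Matrix.mul_apply, Fin.sum_univ_two] using this
  have hd : IsUnit (B 0 0) := by
    have h := (Matrix.isUnit_iff_isUnit_det _).mp hu
    rw [Matrix.det_fin_two] at h
    simp only [Matrix.add_apply, Matrix.cons_val', Matrix.cons_val_zero, Matrix.cons_val_one,
      Matrix.head_cons, Matrix.head_fin_const, Matrix.empty_val', Matrix.cons_val_fin_one] at h
    rw [h01, h10] at h
    simp at h
    exact h.1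
  have hBE : B * !![(0:S),0;0,1] = (B 1 1) • !![(0:S),0;0,1] := by
    ext i j
    fin_cases i <;> fin_cases j <;>
      simp [Matrix.mul_apply, Fin.sum_univ_two, h01, h10]
  have ha : B 1 1 ∈ maximalIdeal S := by
    rw [mem_max_iff]
    intro hua
    obtain ⟨a', ha'⟩ := hua.exists_right_inv
    have hcm : (B * !![(0:S),0;0,1]) * ((-a') • !![(0:S),0;0,1])
        = ((-a') • !![(0:S),0;0,1]) * (B * !![(0:S),0;0,1]) := by
      rw [hBE, Matrix.smul_mul, Matrix.mul_smul, Matrix.smul_mul, Matrix.mul_smul]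
      rw [smul_smul, smul_smul, mul_comm]
    have hIU := hq _ hcm
    have hmat : (1 : Matrix (Fin 2) (Fin 2) S) + (B * !![(0:S),0;0,1]) * ((-a') • !![(0:S),0;0,1])
        = !![(1:S),0;0,0] := by
      rw [hBE, Matrix.smul_mul, Matrix.mul_smul, smul_smul]
      ext i j
      fin_cases i <;> fin_cases j <;>
        simp [Matrix.mul_apply, Fin.sum_univ_two, Matrix.one_apply] <;>
        first
          | ring1
          | linear_combination ha'
          | linear_combination -ha'
          | linear_combination 2 * ha'
          | linear_combination -2 * ha'
    rw [hmat, Matrix.isUnit_iff_isUnit_det] at hIU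
    simp [Matrix.det_fin_two] at hIU
  refine ⟨B 1 1, B 0 0, ha, hd, ?_, ?_⟩
  · rw [Matrix.trace_fin_two]; ring
  · rw [Matrix.det_fin_two, h01, h10]; ring


lemma crit_via_conj (A p U V : Matrix (Fin 2) (Fin 2) S)
    (hVU : V * U = 1) (hUV : U * V = 1)
    (hpA : p * A = A * p) (hup : IsUnit (A + p)) (hq : Quasinilpotent (A * p))
    (hE : V * p * U = !![(1:S),0;0,0] ∨ V * p * U = !![(0:S),0;0,1]) :
    ∃ α β : S, α ∈ maximalIdeal S ∧ IsUnit β ∧ α + β = trace A ∧ α * β = det A := by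
  have hcan : ∀ X : Matrix (Fin 2) (Fin 2) S, U * (V * X) = X := fun X => by
    rw [← mul_assoc, hUV, one_mul]
  have conj_mul : ∀ X Y : Matrix (Fin 2) (Fin 2) S,
      (V * X * U) * (V * Y * U) = V * (X * Y) * U := fun X Y => by
    simp only [mul_assoc, hcan]
  set B := V * A * U with hB
  set P := V * p * U with hP
  have hU : IsUnit U := ⟨⟨U, V, hUV, hVU⟩, rfl⟩
  have hV : IsUnit V := ⟨⟨V, U, hVU, hUV⟩, rfl⟩
  have hPB : P * B = B * P := by rw [hP, hB, conj_mul, conj_mul, hpA]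
  have hBPu : IsUnit (B + P) := by
    have : B + P = V * (A + p) * U := by rw [hB, hP, mul_add, add_mul]
    rw [this, mul_assoc]
    exact hV.mul (hup.mul hU)
  have hqBP : Quasinilpotent (B * P) := by
    rw [hB, hP, conj_mul]
    exact hq.conj hUV hVU
  have htr : trace B = trace A := by
    rw [hB, Matrix.trace_mul_comm, ← mul_assoc, hUV, one_mul]
  have hdet : det B = det A := by
    have h1 : det V * det U = 1 := by rw [← Matrix.det_mul, hVU, Matrix.det_one]
    rw [hB, Matrix.det_mul, Matrix.det_mul]
    linear_combination det A * h1
  rcases hE with hE | hE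
  · obtain ⟨α, β, h1, h2, h3, h4⟩ := crit_of_E11 B (by rw [← hE]; exact hPB)
      (by rw [← hE]; exact hBPu) (by rw [← hE]; exact hqBP)
    exact ⟨α, β, h1, h2, by rw [← htr, h3], by rw [← hdet, h4]⟩
  · obtain ⟨α, β, h1, h2, h3, h4⟩ := crit_of_E22 B (by rw [← hE]; exact hPB)
      (by rw [← hE]; exact hBPu) (by rw [← hE]; exact hqBP)
    exact ⟨α, β, h1, h2, by rw [← htr, h3], by rw [← hdet, h4]⟩

theorem Quasipolar.qpcrit {A : Matrix (Fin 2) (Fin 2) S} (h : Quasipolar A) : QPCrit A := by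
  obtain ⟨p, hpp, hcomm, hunit, hqn⟩ := h
  by_cases hdA : IsUnit (det A)
  · exact Or.inl ((Matrix.isUnit_iff_isUnit_det A).mpr hdA)
  by_cases htA : IsUnit (trace A)
  swap
  · exact Or.inr (Or.inl ⟨mem_max_iff.mpr htA, mem_max_iff.mpr hdA⟩)
  right; right
  have hpA : p * A = A * p := hcomm A rfl
  have hdp : det p * det p = det p := by rw [← Matrix.det_mul, hpp]
  rcases idem_zero_or_one hdp with hdp0 | hdp1
  swap
  · -- det p = 1 : p is a unit, hence p = 1, leading to a contradiction
    exfalso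
    have hup : IsUnit p := (Matrix.isUnit_iff_isUnit_det p).mpr (hdp1 ▸ isUnit_one)
    have hp1 : p = 1 := hup.mul_left_cancel (hpp.trans (mul_one p).symm)
    rw [hp1, mul_one] at hqn
    obtain ⟨t, ht⟩ := htA.exists_right_inv
    have hy : A * ((-t) • (1 : Matrix (Fin 2) (Fin 2) S)) = ((-t) • 1) * A := by
      rw [Matrix.mul_smul, Matrix.smul_mul, mul_one, one_mul]
    have hIU := hqn _ hy
    have hrw : (1 : Matrix (Fin 2) (Fin 2) S) + A * ((-t) • 1) = 1 + (-t) • A := by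
      rw [Matrix.mul_smul, mul_one]
    rw [hrw, Matrix.isUnit_iff_isUnit_det, qp_det_one_add_smul] at hIU
    have hval : (1 : S) + (-t) * trace A + (-t)^2 * det A = t^2 * det A := by
      linear_combination -ht
    rw [hval] at hIU
    exact hdA (isUnit_of_mul_isUnit_right hIU)
  · -- det p = 0
    have hCHp : p = trace p • p := by
      have := cayley_hamilton_fin_two p
      rw [hpp, hdp0] at this
      simpa using this
    have htrp : trace p * trace p = trace p := by
      have := congrArg Matrix.trace hCHp
      rw [Matrix.trace_smul, smul_eq_mul] at this
      exact this.symm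
    rcases idem_zero_or_one htrp with htp0 | htp1
    · exfalso
      have hp0 : p = 0 := by rw [hCHp, htp0, zero_smul]
      rw [hp0, add_zero] at hunit
      exact hdA ((Matrix.isUnit_iff_isUnit_det A).mp hunit)
    · -- nontrivial idempotent
      set e := p 0 0 with he
      set f := p 0 1 with hf
      set g := p 1 0 with hg
      set k := p 1 1 with hk
      have heh : e + k = 1 := by rw [← htp1, Matrix.trace_fin_two]
      have hfg : f * g = e * k := by
        have := hdp0
        rw [Matrix.det_fin_two] at this
        linear_combination -this
      have hpmat : p = !![e, f; g, k] := by
        ext i j; fin_cases i <;> fin_cases j <;> rfl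
      have hor : IsUnit e ∨ IsUnit k :=
        isUnit_or_isUnit_of_isUnit_add (heh ▸ isUnit_one)
      rcases hor with hue | huk
      · obtain ⟨c, hce⟩ := hue.exists_right_inv
        refine crit_via_conj A p !![e, -f; g, e] (c • !![e, f; -g, e]) ?_ ?_ hpA hunit hqn ?_
        · ext i j; fin_cases i <;> fin_cases j <;>
            simp [Matrix.mul_apply, Fin.sum_univ_two, Matrix.one_apply] <;>
            first
              | ring1
              | linear_combination hce
              | linear_combination -hce
              | linear_combination hfg
              | linear_combination -hfg
              | linear_combination e * heh
              | linear_combination k * heh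
              | linear_combination g * heh
              | linear_combination f * heh
              | linear_combination -(e * heh)
              | linear_combination -(k * heh)
              | linear_combination hfg + e * heh
              | linear_combination hfg + k * heh
              | linear_combination -hfg + e * heh
              | linear_combination -hfg + k * heh
              | linear_combination (e - k) * heh
              | linear_combination (k - e) * heh
              | linear_combination c * hfg + c * e * heh + hce
              | linear_combination c * hfg + c * k * heh + hce
              | linear_combination -(c * hfg + c * e * heh + hce)
              | linear_combination -(c * hfg + c * k * heh + hce)
        · ext i j; fin_cases i <;> fin_cases j <;>
            simp [Matrix.mul_apply, Fin.sum_univ_two, Matrix.one_apply] <;>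
            first
              | ring1
              | linear_combination hce
              | linear_combination -hce
              | linear_combination hfg
              | linear_combination -hfg
              | linear_combination e * heh
              | linear_combination k * heh
              | linear_combination g * heh
              | linear_combination f * heh
              | linear_combination -(e * heh)
              | linear_combination -(k * heh)
              | linear_combination hfg + e * heh
              | linear_combination hfg + k * heh
              | linear_combination -hfg + e * heh
              | linear_combination -hfg + k * heh
              | linear_combination (e - k) * heh
              | linear_combination (k - e) * heh
              | linear_combination c * hfg + c * e * heh + hce
              | linear_combination c * hfg + c * k * heh + hce
              | linear_combination -(c * hfg + c * e * heh + hce)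
              | linear_combination -(c * hfg + c * k * heh + hce)
        · left
          have hpU : p * !![e, -f; g, e] = !![e, 0; g, 0] := by
            rw [hpmat]
            ext i j; fin_cases i <;> fin_cases j <;>
              simp [Matrix.mul_apply, Fin.sum_univ_two] <;>
              first
              | ring1
              | linear_combination hce
              | linear_combination -hce
              | linear_combination hfg
              | linear_combination -hfg
              | linear_combination e * heh
              | linear_combination k * heh
              | linear_combination g * heh
              | linear_combination f * heh
              | linear_combination -(e * heh)
              | linear_combination -(k * heh)
              | linear_combination hfg + e * heh
              | linear_combination hfg + k * heh
              | linear_combination -hfg + e * heh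
              | linear_combination -hfg + k * heh
              | linear_combination (e - k) * heh
              | linear_combination (k - e) * heh
              | linear_combination c * hfg + c * e * heh + hce
              | linear_combination c * hfg + c * k * heh + hce
              | linear_combination -(c * hfg + c * e * heh + hce)
              | linear_combination -(c * hfg + c * k * heh + hce)
          rw [mul_assoc, hpU]
          ext i j; fin_cases i <;> fin_cases j <;>
            simp [Matrix.mul_apply, Fin.sum_univ_two] <;>
            first
              | ring1
              | linear_combination hce
              | linear_combination -hce
              | linear_combination hfg
              | linear_combination -hfg
              | linear_combination e * heh
              | linear_combination k * heh
              | linear_combination g * heh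
              | linear_combination f * heh
              | linear_combination -(e * heh)
              | linear_combination -(k * heh)
              | linear_combination hfg + e * heh
              | linear_combination hfg + k * heh
              | linear_combination -hfg + e * heh
              | linear_combination -hfg + k * heh
              | linear_combination (e - k) * heh
              | linear_combination (k - e) * heh
              | linear_combination c * hfg + c * e * heh + hce
              | linear_combination c * hfg + c * k * heh + hce
              | linear_combination -(c * hfg + c * e * heh + hce)
              | linear_combination -(c * hfg + c * k * heh + hce)
      · obtain ⟨c, hce⟩ := huk.exists_right_inv
        refine crit_via_conj A p !![k, f; -g, k] (c • !![k, -f; g, k]) ?_ ?_ hpA hunit hqn ?_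
        · ext i j; fin_cases i <;> fin_cases j <;>
            simp [Matrix.mul_apply, Fin.sum_univ_two, Matrix.one_apply] <;>
            first
              | ring1
              | linear_combination hce
              | linear_combination -hce
              | linear_combination hfg
              | linear_combination -hfg
              | linear_combination e * heh
              | linear_combination k * heh
              | linear_combination g * heh
              | linear_combination f * heh
              | linear_combination -(e * heh)
              | linear_combination -(k * heh)
              | linear_combination hfg + e * heh
              | linear_combination hfg + k * heh
              | linear_combination -hfg + e * heh
              | linear_combination -hfg + k * heh
              | linear_combination (e - k) * heh
              | linear_combination (k - e) * heh
              | linear_combination c * hfg + c * e * heh + hce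
              | linear_combination c * hfg + c * k * heh + hce
              | linear_combination -(c * hfg + c * e * heh + hce)
              | linear_combination -(c * hfg + c * k * heh + hce)
        · ext i j; fin_cases i <;> fin_cases j <;>
            simp [Matrix.mul_apply, Fin.sum_univ_two, Matrix.one_apply] <;>
            first
              | ring1
              | linear_combination hce
              | linear_combination -hce
              | linear_combination hfg
              | linear_combination -hfg
              | linear_combination e * heh
              | linear_combination k * heh
              | linear_combination g * heh
              | linear_combination f * heh
              | linear_combination -(e * heh)
              | linear_combination -(k * heh)
              | linear_combination hfg + e * heh
              | linear_combination hfg + k * heh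
              | linear_combination -hfg + e * heh
              | linear_combination -hfg + k * heh
              | linear_combination (e - k) * heh
              | linear_combination (k - e) * heh
              | linear_combination c * hfg + c * e * heh + hce
              | linear_combination c * hfg + c * k * heh + hce
              | linear_combination -(c * hfg + c * e * heh + hce)
              | linear_combination -(c * hfg + c * k * heh + hce)
        · right
          have hpU : p * !![k, f; -g, k] = !![0, f; 0, k] := by
            rw [hpmat]
            ext i j; fin_cases i <;> fin_cases j <;>
              simp [Matrix.mul_apply, Fin.sum_univ_two] <;>
              first
              | ring1
              | linear_combination hce
              | linear_combination -hce
              | linear_combination hfg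
              | linear_combination -hfg
              | linear_combination e * heh
              | linear_combination k * heh
              | linear_combination g * heh
              | linear_combination f * heh
              | linear_combination -(e * heh)
              | linear_combination -(k * heh)
              | linear_combination hfg + e * heh
              | linear_combination hfg + k * heh
              | linear_combination -hfg + e * heh
              | linear_combination -hfg + k * heh
              | linear_combination (e - k) * heh
              | linear_combination (k - e) * heh
              | linear_combination c * hfg + c * e * heh + hce
              | linear_combination c * hfg + c * k * heh + hce
              | linear_combination -(c * hfg + c * e * heh + hce)
              | linear_combination -(c * hfg + c * k * heh + hce)
          rw [mul_assoc, hpU]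
          ext i j; fin_cases i <;> fin_cases j <;>
            simp [Matrix.mul_apply, Fin.sum_univ_two] <;>
            first
              | ring1
              | linear_combination hce
              | linear_combination -hce
              | linear_combination hfg
              | linear_combination -hfg
              | linear_combination e * heh
              | linear_combination k * heh
              | linear_combination g * heh
              | linear_combination f * heh
              | linear_combination -(e * heh)
              | linear_combination -(k * heh)
              | linear_combination hfg + e * heh
              | linear_combination hfg + k * heh
              | linear_combination -hfg + e * heh
              | linear_combination -hfg + k * heh
              | linear_combination (e - k) * heh
              | linear_combination (k - e) * heh
              | linear_combination c * hfg + c * e * heh + hce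
              | linear_combination c * hfg + c * k * heh + hce
              | linear_combination -(c * hfg + c * e * heh + hce)
              | linear_combination -(c * hfg + c * k * heh + hce)

end Forward



section PS
open PowerSeries
variable {R : Type*} [CommRing R]

lemma mem_pow_span_X_iff (n : ℕ) (f : R⟦X⟧) :
    f ∈ (Ideal.span {(X : R⟦X⟧)}) ^ n ↔ ∀ i < n, (coeff i) f = 0 := by
  rw [Ideal.span_singleton_pow, Ideal.mem_span_singleton, PowerSeries.X_pow_dvd_iff]

lemma smod_span_X_iff (n : ℕ) (f g : R⟦X⟧) :
    (f ≡ g [SMOD ((Ideal.span {(X : R⟦X⟧)}) ^ n • ⊤ : Submodule R⟦X⟧ R⟦X⟧)]) ↔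
      ∀ i < n, (coeff i) f = (coeff i) g := by
  rw [SModEq.sub_mem, smul_eq_mul, Ideal.mul_top, mem_pow_span_X_iff]
  constructor
  · intro h i hi
    have := h i hi
    rw [map_sub, sub_eq_zero] at this
    exact this
  · intro h i hi
    rw [map_sub, sub_eq_zero]
    exact h i hi

instance instAdicCompletePowerSeries :
    IsAdicComplete (Ideal.span {(X : R⟦X⟧)}) R⟦X⟧ where
  haus' := by
    intro x hx
    ext i
    have := (smod_span_X_iff (i + 1) x 0).mp (hx (i + 1)) i (Nat.lt_succ_self i)
    simpa using this
  prec' := by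
    intro f hf
    refine ⟨PowerSeries.mk (fun i => (coeff i) (f (i + 1))), fun n => ?_⟩
    rw [smod_span_X_iff]
    intro i hi
    have h1 : i + 1 ≤ n := hi
    have := (smod_span_X_iff (i + 1) (f (i + 1)) (f n)).mp (hf h1) i (Nat.lt_succ_self i)
    rw [PowerSeries.coeff_mk]
    exact this.symm

lemma exists_quadratic_root [IsLocalRing R] (T D : R⟦X⟧) (α₀ β₀ : R)
    (hd : IsUnit (β₀ - α₀))
    (hsum : α₀ + β₀ = constantCoeff T) (hprod : α₀ * β₀ = constantCoeff D) :
    ∃ β : R⟦X⟧, β * β - T * β + D = 0 ∧ constantCoeff β = β₀ := by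
  set I : Ideal R⟦X⟧ := Ideal.span {(X : R⟦X⟧)} with hI
  have hmemI : ∀ f : R⟦X⟧, constantCoeff f = 0 → f ∈ I := by
    intro f hf
    rw [hI, Ideal.mem_span_singleton, PowerSeries.X_dvd_iff]
    exact hf
  set a₀ : R⟦X⟧ := PowerSeries.C β₀ with ha₀
  set f : Polynomial R⟦X⟧ :=
    Polynomial.X ^ 2 + (Polynomial.C (-T) * Polynomial.X + Polynomial.C D) with hfdef
  have hmonic : f.Monic := by
    apply Polynomial.monic_X_pow_add
    have h1 : (Polynomial.C (-T) * Polynomial.X).degree ≤ 1 := by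
      simpa using Polynomial.degree_C_mul_X_le (-T)
    calc (Polynomial.C (-T) * Polynomial.X + Polynomial.C D).degree
        ≤ max (Polynomial.C (-T) * Polynomial.X).degree (Polynomial.C D).degree :=
          Polynomial.degree_add_le _ _
      _ ≤ 1 := max_le h1 (le_trans Polynomial.degree_C_le (by norm_num))
      _ < 2 := by norm_num
  have h1 : f.eval a₀ ∈ I := by
    apply hmemI
    rw [hfdef]
    simp [ha₀, pow_two]
    linear_combination β₀ * hsum - hprod
  have h2 : IsUnit (Ideal.Quotient.mk I (Polynomial.eval a₀ (Polynomial.derivative f))) := by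
    have hder : Polynomial.eval a₀ (Polynomial.derivative f) = 2 * a₀ - T := by
      rw [hfdef]
      simp
      ring
    rw [hder]
    have hmk : Ideal.Quotient.mk I (2 * a₀ - T) = Ideal.Quotient.mk I (PowerSeries.C (β₀ - α₀)) := by
      rw [Ideal.Quotient.mk_eq_mk_iff_sub_mem]
      apply hmemI
      simp only [ha₀, map_sub, _root_.map_mul, map_ofNat, PowerSeries.constantCoeff_C]
      linear_combination hsum
    rw [hmk]
    exact (PowerSeries.isUnit_iff_constantCoeff.mpr (by simpa using hd)).map (Ideal.Quotient.mk I)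
  obtain ⟨a, haroot, hamem⟩ := HenselianRing.is_henselian f hmonic a₀ h1 h2
  refine ⟨a, ?_, ?_⟩
  · have := haroot
    rw [Polynomial.IsRoot, hfdef] at this
    simp [pow_two] at this
    linear_combination this
  · have : constantCoeff (a - a₀) = 0 := by
      rw [hI, Ideal.mem_span_singleton, PowerSeries.X_dvd_iff] at hamem
      exact hamem
    rw [map_sub] at this
    simp [ha₀] at this
    linear_combination this


end PS

section Final
open PowerSeries

theorem quasipolar_iff_qpcrit {S : Type*} [CommRing S] [IsLocalRing S]
    (A : Matrix (Fin 2) (Fin 2) S) : Quasipolar A ↔ QPCrit A :=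
  ⟨Quasipolar.qpcrit, QPCrit.quasipolar⟩

/-- For a commutative local ring `R`, `A(x) ∈ M₂(R[[x]])` is quasipolar iff
`A(0) ∈ M₂(R)` is quasipolar. -/
theorem quasipolar_powerSeries_matrix {R : Type*} [CommRing R] [IsLocalRing R]
    (A : Matrix (Fin 2) (Fin 2) (PowerSeries R)) :
    Quasipolar A ↔ Quasipolar (A.map (PowerSeries.constantCoeff (R := R))) := by
  rw [quasipolar_iff_qpcrit, quasipolar_iff_qpcrit]
  set φ := PowerSeries.constantCoeff (R := R) with hφ
  have hdet : det (A.map φ) = φ (det A) := (RingHom.map_det φ A).symm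
  have htr : trace (A.map φ) = φ (trace A) := by
    simp [Matrix.trace_fin_two, Matrix.map_apply, map_add]
  have hu : ∀ g : R⟦X⟧, IsUnit g ↔ IsUnit (φ g) := fun g =>
    PowerSeries.isUnit_iff_constantCoeff
  have hm : ∀ g : R⟦X⟧, g ∈ maximalIdeal R⟦X⟧ ↔ φ g ∈ maximalIdeal R := fun g => by
    rw [mem_max_iff, mem_max_iff, hu]
  constructor
  · rintro (h | ⟨h1, h2⟩ | ⟨α, β, h1, h2, h3, h4⟩)
    · left
      rw [Matrix.isUnit_iff_isUnit_det, hdet]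
      exact (hu _).mp ((Matrix.isUnit_iff_isUnit_det A).mp h)
    · right; left
      exact ⟨htr ▸ (hm _).mp h1, hdet ▸ (hm _).mp h2⟩
    · right; right
      refine ⟨φ α, φ β, (hm _).mp h1, (hu _).mp h2, ?_, ?_⟩
      · rw [htr, ← map_add, h3]
      · rw [hdet, ← _root_.map_mul, h4]
  · rintro (h | ⟨h1, h2⟩ | ⟨α₀, β₀, h1, h2, h3, h4⟩)
    · left
      rw [Matrix.isUnit_iff_isUnit_det]
      rw [Matrix.isUnit_iff_isUnit_det, hdet] at h
      exact (hu _).mpr h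
    · right; left
      rw [htr] at h1; rw [hdet] at h2
      exact ⟨(hm _).mpr h1, (hm _).mpr h2⟩
    · right; right
      rw [htr] at h3; rw [hdet] at h4
      obtain ⟨β, hroot, hcc⟩ := exists_quadratic_root (trace A) (det A) α₀ β₀
        (isUnit_unit_sub_mem h1 h2) h3 h4
      refine ⟨trace A - β, β, ?_, ?_, by ring, ?_⟩
      · rw [hm]
        have : φ (trace A - β) = α₀ := by
          rw [map_sub, ← h3, hcc]; ring
        rw [this]
        exact h1
      · rw [hu, hcc]; exact h2
      · linear_combination -hroot

end Final
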